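/- arXiv:2507.23102 — 3 statements merged into one kernel-verified Lean document; each statement's English description precedes it below -/
import Mathlib

section
/- Let 𝒱 ⊆ W satisfy condition (⋆) and let s be a sign function for 𝒱. Then the associated differential satisfies d ∘ d = 0; consequently (C^•𝒱, d) is a cochain complex. -/
open Finset
open scoped RealInnerProductSpace

noncomputable section

variable {E : Type*} [NormedAddCommGroup E] [InnerProductSpace ℝ E] [FiniteDimensional ℝ E]

/-- The orthogonal reflection `σ_α` in the hyperplane orthogonal to `α`; for `α ≠ 0` it is
given by the formula `σ_α v = v - (2⟪v,α⟫/⟪α,α⟫) • α`. -/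
noncomputable def sigmaRefl (α : E) : E ≃ₗᵢ[ℝ] E :=
  Submodule.reflection (ℝ ∙ α)ᗮ

/-- The Weyl group `W`: the subgroup of the orthogonal group of `E` generated by the
reflections `σ_α` for `α ∈ Φ`. -/
def Weyl (Φ : Finset E) : Subgroup (E ≃ₗᵢ[ℝ] E) :=
  Subgroup.closure {g | ∃ α ∈ Φ, g = sigmaRefl α}

variable [DecidableEq E]

/-- `Φ⁻ = -Φ⁺`. -/
def negSet (Pos : Finset E) : Finset E := Pos.image (fun x => -x)

/-- Length `l(w) = #(Φ⁺ ∩ wΦ⁻)`. -/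
def len (Pos : Finset E) (w : E ≃ₗᵢ[ℝ] E) : ℕ :=
  (Pos ∩ (negSet Pos).image w).card

/-- Compact length `l_K(w) = #(Φ⁺ ∩ wΦ⁻ ∩ Φ_K)`. -/
def lenK (Pos ΦK : Finset E) (w : E ≃ₗᵢ[ℝ] E) : ℕ :=
  (Pos ∩ (negSet Pos).image w ∩ ΦK).card

/-- `x → y` iff `x = σ_α y` for some `α ∈ Φ` and `l(x) = l(y) + 1`. -/
def Arrow (Φ Pos : Finset E) (x y : E ≃ₗᵢ[ℝ] E) : Prop :=
  (∃ α ∈ Φ, x = sigmaRefl α * y) ∧ len Pos x = len Pos y + 1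

/-- Bruhat order: `x < y` iff there is a chain `y → u₁ → ⋯ → u_k → x`. -/
def BruhatLT (Φ Pos : Finset E) (x y : E ≃ₗᵢ[ℝ] E) : Prop :=
  Relation.TransGen (Arrow Φ Pos) y x

/-- Condition `(⋆)`: for all `w₁, w₂ ∈ 𝒱` with `l(w₁) = l(w₂) + 2`, the set
`{w ∈ 𝒱 : w₂ < w < w₁}` has either `0` or `2` elements. -/
def StarCond (Φ Pos : Finset E) (V : Set (E ≃ₗᵢ[ℝ] E)) : Prop :=
  ∀ w₁ ∈ V, ∀ w₂ ∈ V, len Pos w₁ = len Pos w₂ + 2 →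
    ({w ∈ V | BruhatLT Φ Pos w₂ w ∧ BruhatLT Φ Pos w w₁}.ncard = 0 ∨
      {w ∈ V | BruhatLT Φ Pos w₂ w ∧ BruhatLT Φ Pos w w₁}.ncard = 2)

/-- A sign function for `𝒱`: `s(x,y) ∈ {1, -1}` whenever `x → y`, `s(x,y) = 0` whenever
`x → y` fails, and `s(x,w)s(w,y) + s(x,w')s(w',y) = 0` for distinct `w, w' ∈ 𝒱` with
`x → w → y` and `x → w' → y`. -/
def IsSignFunction (Φ Pos : Finset E) (V : Set (E ≃ₗᵢ[ℝ] E))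
    (s : (E ≃ₗᵢ[ℝ] E) → (E ≃ₗᵢ[ℝ] E) → ℂ) : Prop :=
  (∀ x ∈ V, ∀ y ∈ V, Arrow Φ Pos x y → (s x y = 1 ∨ s x y = -1)) ∧
  (∀ x ∈ V, ∀ y ∈ V, ¬ Arrow Φ Pos x y → s x y = 0) ∧
  (∀ x ∈ V, ∀ y ∈ V, ∀ w ∈ V, ∀ w' ∈ V, w ≠ w' →
    Arrow Φ Pos x w → Arrow Φ Pos w y → Arrow Φ Pos x w' → Arrow Φ Pos w' y →
    s x w * s w y + s x w' * s w' y = 0)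

/-- `C^q𝒱`, realized as the subspace of the free `ℂ`-vector space on `𝒱` consisting of
vectors supported on basis elements of length `q`. -/
def CqSub (Pos : Finset E) (V : Finset (E ≃ₗᵢ[ℝ] E)) (q : ℤ) :
    Submodule ℂ (↥V →₀ ℂ) :=
  Finsupp.supported ℂ ℂ {v : ↥V | (len Pos ↑v : ℤ) = q}

/-- The differential: on a basis element `y ∈ 𝒱`, `d(y) = Σ_{x ∈ 𝒱} s(x,y)·x`
(which is `Σ_{x ∈ 𝒱, x → y} s(x,y)·x` when `s` is a sign function, since then `s(x,y) = 0`
unless `x → y`). -/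
noncomputable def totalDiff (V : Finset (E ≃ₗᵢ[ℝ] E))
    (s : (E ≃ₗᵢ[ℝ] E) → (E ≃ₗᵢ[ℝ] E) → ℂ) : (↥V →₀ ℂ) →ₗ[ℂ] (↥V →₀ ℂ) :=
  Finsupp.lsum ℂ fun y => ∑ x : ↥V, s ↑x ↑y • Finsupp.lsingle x


section Aux

variable {Φ Pos : Finset E}

lemma len_lt_of_transGen {a b : E ≃ₗᵢ[ℝ] E}
    (h : Relation.TransGen (Arrow Φ Pos) a b) : len Pos b < len Pos a := by
  induction h with
  | single h => have := h.2; omega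
  | tail h1 h2 ih => have := h2.2; omega

lemma arrow_of_transGen {a b : E ≃ₗᵢ[ℝ] E}
    (h : Relation.TransGen (Arrow Φ Pos) a b)
    (hl : len Pos a = len Pos b + 1) : Arrow Φ Pos a b := by
  induction h with
  | single h => exact h
  | tail h1 h2 ih =>
      exact absurd hl (by have := len_lt_of_transGen h1; have := h2.2; omega)

lemma key_sum (V : Finset (E ≃ₗᵢ[ℝ] E)) (hV : StarCond Φ Pos ↑V)
    (s : (E ≃ₗᵢ[ℝ] E) → (E ≃ₗᵢ[ℝ] E) → ℂ) (hs : IsSignFunction Φ Pos ↑V s)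
    (x y : ↥V) : ∑ w : ↥V, s ↑x ↑w * s ↑w ↑y = 0 := by
  classical
  obtain ⟨h1, h2, h3⟩ := hs
  set T : Finset ↥V :=
    Finset.univ.filter (fun w => Arrow Φ Pos ↑x ↑w ∧ Arrow Φ Pos ↑w ↑y) with hT
  have hzero : ∀ w : ↥V, w ∉ T → s ↑x ↑w * s ↑w ↑y = 0 := by
    intro w hw
    rw [hT, Finset.mem_filter] at hw
    push_neg at hw
    by_cases hxw : Arrow Φ Pos ↑x ↑w
    · have := h2 ↑w w.2 ↑y y.2 (hw (Finset.mem_univ w) hxw)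
      rw [this, mul_zero]
    · rw [h2 ↑x x.2 ↑w w.2 hxw, zero_mul]
  have hsum : ∑ w : ↥V, s ↑x ↑w * s ↑w ↑y = ∑ w ∈ T, s ↑x ↑w * s ↑w ↑y := by
    refine (Finset.sum_subset (Finset.subset_univ T) ?_).symm
    intro w _ hw; exact hzero w hw
  rcases T.eq_empty_or_nonempty with hTe | ⟨w0, hw0⟩
  · rw [hsum, hTe, Finset.sum_empty]
  · rw [hT, Finset.mem_filter] at hw0
    obtain ⟨-, A1, A2⟩ := hw0
    have hlen : len Pos ↑x = len Pos ↑y + 2 := by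
      have := A1.2; have := A2.2; omega
    have hSeq : {w ∈ (↑V : Set (E ≃ₗᵢ[ℝ] E)) |
        BruhatLT Φ Pos ↑y w ∧ BruhatLT Φ Pos w ↑x}
        = ↑(T.image Subtype.val) := by
      ext w
      simp only [Set.mem_setOf_eq, Finset.coe_image, Set.mem_image,
        Finset.mem_coe, hT, Finset.mem_filter, Finset.mem_univ, true_and]
      constructor
      · rintro ⟨hwV, hyw, hwx⟩
        have l1 : len Pos w > len Pos (↑y : E ≃ₗᵢ[ℝ] E) := len_lt_of_transGen hyw
        have l2 : len Pos (↑x : E ≃ₗᵢ[ℝ] E) > len Pos w := len_lt_of_transGen hwx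
        have hw1 : len Pos w = len Pos (↑y : E ≃ₗᵢ[ℝ] E) + 1 := by omega
        have hA1 : Arrow Φ Pos ↑x w := arrow_of_transGen hwx (by omega)
        have hA2 : Arrow Φ Pos w ↑y := arrow_of_transGen hyw hw1
        exact ⟨⟨w, hwV⟩, ⟨hA1, hA2⟩, rfl⟩
      · rintro ⟨w', ⟨hxw, hwy⟩, rfl⟩
        exact ⟨w'.2, Relation.TransGen.single hwy, Relation.TransGen.single hxw⟩
    have hcard : (T.image Subtype.val).card = T.card :=
      Finset.card_image_of_injective _ Subtype.val_injective
    have hmem0 : (↑w0 : E ≃ₗᵢ[ℝ] E) ∈ T.image Subtype.val := by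
      refine Finset.mem_image_of_mem _ ?_
      rw [hT, Finset.mem_filter]; exact ⟨Finset.mem_univ _, A1, A2⟩
    rcases hV ↑x x.2 ↑y y.2 hlen with h0' | h2'
    · rw [hSeq, Set.ncard_coe_finset, hcard] at h0'
      have : w0 ∈ T := by rw [hT, Finset.mem_filter]; exact ⟨Finset.mem_univ _, A1, A2⟩
      rw [Finset.card_eq_zero] at h0'
      simp [h0'] at this
    · rw [hSeq, Set.ncard_coe_finset, hcard] at h2'
      obtain ⟨a, b, hab, hTab⟩ := Finset.card_eq_two.mp h2'
      have ha : a ∈ T := by rw [hTab]; exact Finset.mem_insert_self a _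
      have hb : b ∈ T := by rw [hTab]; simp
      rw [hT, Finset.mem_filter] at ha hb
      rw [hsum, hTab, Finset.sum_pair hab]
      exact h3 ↑x x.2 ↑y y.2 ↑a a.2 ↑b b.2 (Subtype.coe_injective.ne hab)
        ha.2.1 ha.2.2 hb.2.1 hb.2.2

end Aux

theorem statement6
    (Φ : Finset E) (h0 : (0 : E) ∉ Φ)
    (hrefl : ∀ α ∈ Φ, Φ.image (sigmaRefl α) = Φ)
    (hred : ∀ α ∈ Φ, {x : E | x ∈ Φ ∧ ∃ t : ℝ, x = t • α} = {α, -α})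
    (f : E) (hf : ∀ α ∈ Φ, ⟪f, α⟫ ≠ 0)
    (Pos : Finset E) (hPos : Pos = Φ.filter fun α => 0 < ⟪f, α⟫)
    (V : Finset (E ≃ₗᵢ[ℝ] E)) (hVW : ↑V ⊆ (Weyl Φ : Set (E ≃ₗᵢ[ℝ] E)))
    (hV : StarCond Φ Pos ↑V)
    (s : (E ≃ₗᵢ[ℝ] E) → (E ≃ₗᵢ[ℝ] E) → ℂ) (hs : IsSignFunction Φ Pos ↑V s) :
    totalDiff V s ∘ₗ totalDiff V s = 0 ∧
    ∀ q : ℤ, (CqSub Pos V q).map (totalDiff V s) ≤ CqSub Pos V (q + 1) := by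
  classical
  constructor
  · apply Finsupp.lhom_ext
    intro y c
    rw [LinearMap.comp_apply]
    rw [show totalDiff V s (Finsupp.single y c)
        = ∑ x : ↥V, s ↑x ↑y • Finsupp.single x c from by
      simp [totalDiff, Finsupp.lsum_single, LinearMap.sum_apply]]
    rw [map_sum]
    have hterm : ∀ x : ↥V, totalDiff V s (s ↑x ↑y • Finsupp.single x c)
        = ∑ w : ↥V, (s ↑w ↑x * s ↑x ↑y) • Finsupp.single w c := by
      intro x
      rw [map_smul]
      rw [show totalDiff V s (Finsupp.single x c)
          = ∑ w : ↥V, s ↑w ↑x • Finsupp.single w c from by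
        simp [totalDiff, Finsupp.lsum_single, LinearMap.sum_apply]]
      rw [Finset.smul_sum]
      refine Finset.sum_congr rfl fun w _ => ?_
      rw [smul_smul, mul_comm]
    simp_rw [hterm]
    rw [Finset.sum_comm]
    rw [LinearMap.zero_apply]
    refine Finset.sum_eq_zero fun w _ => ?_
    rw [← Finset.sum_smul, key_sum V hV s hs w y, zero_smul]
  · intro q z hz
    obtain ⟨p, hp, rfl⟩ := hz
    have hp' : ↑p.support ⊆ {v : ↥V | (len Pos ↑v : ℤ) = q} :=
      Finsupp.mem_supported ℂ p |>.mp hp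
    rw [totalDiff, Finsupp.lsum_apply]
    refine Submodule.sum_mem _ fun y hy => ?_
    show (∑ x : ↥V, s ↑x ↑y • Finsupp.lsingle x) (p y) ∈ CqSub Pos V (q + 1)
    rw [LinearMap.sum_apply]
    refine Submodule.sum_mem _ fun x _ => ?_
    rw [LinearMap.smul_apply, Finsupp.lsingle_apply, Finsupp.smul_single]
    by_cases hsxy : s ↑x ↑y = 0
    · rw [hsxy, zero_smul, Finsupp.single_zero]; exact Submodule.zero_mem _
    · refine Finsupp.single_mem_supported ℂ _ ?_
      have hArr : Arrow Φ Pos ↑x ↑y := by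
        by_contra hA
        exact hsxy (hs.2.1 ↑x x.2 ↑y y.2 hA)
      have hyq : (len Pos (↑y : E ≃ₗᵢ[ℝ] E) : ℤ) = q := hp' hy
      have := hArr.2
      show (len Pos (↑x : E ≃ₗᵢ[ℝ] E) : ℤ) = q + 1
      omega

end
end

section
/- Let w₀ ∈ W satisfy w₀Φ⁺ = Φ⁻, let 𝒱 ⊆ W satisfy condition (⋆), let s be a sign function for 𝒱, and equip 𝒱·w₀ with the transposed sign function s′(x·w₀, y·w₀) = s(y, x). Then for every integer k, dim_ℂ H^k(𝒱) = dim_ℂ H^{N−k}(𝒱·w₀). -/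
open Finset
open scoped RealInnerProductSpace

noncomputable section

variable {E : Type*} [NormedAddCommGroup E] [InnerProductSpace ℝ E] [FiniteDimensional ℝ E]

variable [DecidableEq E]

/-- Cocycles in degree `q`: the elements of `C^q𝒱` lying in `ker d`. -/
noncomputable def Zq (Pos : Finset E) (V : Finset (E ≃ₗᵢ[ℝ] E))
    (s : (E ≃ₗᵢ[ℝ] E) → (E ≃ₗᵢ[ℝ] E) → ℂ) (q : ℤ) : Submodule ℂ (↥V →₀ ℂ) :=
  CqSub Pos V q ⊓ LinearMap.ker (totalDiff V s)

/-- Coboundaries in degree `q`: `im(d : C^{q-1}𝒱 → C^q𝒱)`. -/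
noncomputable def Bfull (Pos : Finset E) (V : Finset (E ≃ₗᵢ[ℝ] E))
    (s : (E ≃ₗᵢ[ℝ] E) → (E ≃ₗᵢ[ℝ] E) → ℂ) (q : ℤ) : Submodule ℂ (↥V →₀ ℂ) :=
  (CqSub Pos V (q - 1)).map (totalDiff V s)

/-- `H^q(𝒱) = ker(d : C^q → C^{q+1}) / im(d : C^{q-1} → C^q)`, realized as the image of the
cocycles in the quotient by the coboundaries (for a cochain complex this image is canonically
isomorphic to the usual quotient `ker d / im d`). -/
noncomputable def cohomology (Pos : Finset E) (V : Finset (E ≃ₗᵢ[ℝ] E))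
    (s : (E ≃ₗᵢ[ℝ] E) → (E ≃ₗᵢ[ℝ] E) → ℂ) (q : ℤ) :
    Submodule ℂ ((↥V →₀ ℂ) ⧸ Bfull Pos V s q) :=
  (Zq Pos V s q).map (Bfull Pos V s q).mkQ

/-- `dim_ℂ H^q(𝒱)`. -/
noncomputable def cohomDim (Pos : Finset E) (V : Finset (E ≃ₗᵢ[ℝ] E))
    (s : (E ≃ₗᵢ[ℝ] E) → (E ≃ₗᵢ[ℝ] E) → ℂ) (q : ℤ) : ℕ :=
  Module.finrank ℂ ↥(cohomology Pos V s q)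

section AbstractPart
open Module LinearMap Matrix


variable {ι : Type*} [Fintype ι] [DecidableEq ι]

/-- abstract graded piece -/
def aC (L : ι → ℤ) (q : ℤ) : Submodule ℂ (ι →₀ ℂ) :=
  Finsupp.supported ℂ ℂ {i : ι | L i = q}

/-- abstract differential -/
def aD (t : ι → ι → ℂ) : (ι →₀ ℂ) →ₗ[ℂ] (ι →₀ ℂ) :=
  Finsupp.lsum ℂ fun y => ∑ x : ι, t x y • Finsupp.lsingle x

def aZ (L : ι → ℤ) (t : ι → ι → ℂ) (q : ℤ) : Submodule ℂ (ι →₀ ℂ) :=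
  aC L q ⊓ LinearMap.ker (aD t)

def aB (L : ι → ℤ) (t : ι → ι → ℂ) (q : ℤ) : Submodule ℂ (ι →₀ ℂ) :=
  (aC L (q - 1)).map (aD t)

def aH (L : ι → ℤ) (t : ι → ι → ℂ) (q : ℤ) :
    Submodule ℂ ((ι →₀ ℂ) ⧸ aB L t q) :=
  (aZ L t q).map (aB L t q).mkQ

def aDim (L : ι → ℤ) (t : ι → ι → ℂ) (q : ℤ) : ℕ :=
  finrank ℂ (aH L t q)

def Amat (t : ι → ι → ℂ) : Matrix ι ι ℂ := Matrix.of t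

def Pmat (L : ι → ℤ) (q : ℤ) : Matrix ι ι ℂ :=
  Matrix.diagonal (fun i => if L i = q then 1 else 0)

/-- the key pointwise formula for aD -/
lemma aD_coe (t : ι → ι → ℂ) (g : ι →₀ ℂ) :
    ⇑(aD t g) = (Amat t).mulVec ⇑g := by
  induction g using Finsupp.induction_linear with
  | zero => simp [Matrix.mulVec_zero]
  | add f g hf hg => simp [map_add, hf, hg, Matrix.mulVec_add]
  | single y c =>
    funext i
    simp only [aD, Finsupp.lsum_single, LinearMap.sum_apply, LinearMap.smul_apply,
      Finsupp.lsingle_apply]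
    rw [Finsupp.finset_sum_apply]
    simp [Finsupp.single_apply, Matrix.mulVec, dotProduct, Amat, mul_comm,
      Finset.sum_ite_eq, Finset.sum_ite_eq']

lemma aD_apply (t : ι → ι → ℂ) (g : ι →₀ ℂ) (i : ι) :
    aD t g i = ∑ j : ι, t i j * g j := by
  rw [show (aD t g) i = (⇑(aD t g)) i from rfl, aD_coe]
  simp [Matrix.mulVec, dotProduct, Amat]

/-- φ intertwines aD with mulVecLin -/
lemma phi_comp_aD (t : ι → ι → ℂ) :
    (Finsupp.linearEquivFunOnFinite ℂ ℂ ι).toLinearMap ∘ₗ aD t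
      = (Amat t).mulVecLin ∘ₗ (Finsupp.linearEquivFunOnFinite ℂ ℂ ι).toLinearMap := by
  apply LinearMap.ext; intro g
  exact aD_coe t g

lemma map_phi_aC (L : ι → ℤ) (q : ℤ) :
    (aC L q).map (Finsupp.linearEquivFunOnFinite ℂ ℂ ι).toLinearMap
      = LinearMap.range (Pmat L q).mulVecLin := by
  ext f
  constructor
  · rintro ⟨g, hg, rfl⟩
    refine ⟨g, ?_⟩
    funext i
    simp only [Matrix.mulVecLin_apply, Pmat, Matrix.mulVec_diagonal]
    by_cases h : L i = q
    · simp [h]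
    · have := (Finsupp.mem_supported' ℂ g).mp hg i h
      simp [h, this]
  · rintro ⟨g, rfl⟩
    refine ⟨(Finsupp.linearEquivFunOnFinite ℂ ℂ ι).symm ((Pmat L q).mulVecLin g), ?_, by simp⟩
    simp only [SetLike.mem_coe, aC]
    rw [Finsupp.mem_supported']
    intro i hi
    have hi' : L i ≠ q := hi
    have hrfl : ((Finsupp.linearEquivFunOnFinite ℂ ℂ ι).symm ((Pmat L q).mulVecLin g)) i
        = ((Pmat L q).mulVecLin g) i := rfl
    rw [hrfl]
    simp [Matrix.mulVecLin_apply, Pmat, Matrix.mulVec_diagonal, hi']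

lemma finrank_aB_eq_rank (L : ι → ℤ) (t : ι → ι → ℂ) (q : ℤ) :
    finrank ℂ (aB L t q) = (Amat t * Pmat L (q - 1)).rank := by
  have h1 : finrank ℂ (aB L t q)
      = finrank ℂ ((aB L t q).map (Finsupp.linearEquivFunOnFinite ℂ ℂ ι).toLinearMap) := by
    rw [show ((Finsupp.linearEquivFunOnFinite ℂ ℂ ι).toLinearMap : (ι →₀ ℂ) →ₗ[ℂ] (ι → ℂ))
      = ((Finsupp.linearEquivFunOnFinite ℂ ℂ ι : (ι →₀ ℂ) ≃ₗ[ℂ] (ι → ℂ)) : (ι →₀ ℂ) →ₗ[ℂ] (ι → ℂ)) from rfl,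
      LinearEquiv.finrank_map_eq]
  rw [h1]
  have h2 : (aB L t q).map (Finsupp.linearEquivFunOnFinite ℂ ℂ ι).toLinearMap
      = LinearMap.range (Amat t * Pmat L (q-1)).mulVecLin := by
    rw [aB, ← Submodule.map_comp, phi_comp_aD, Submodule.map_comp, map_phi_aC,
      Matrix.mulVecLin_mul, ← LinearMap.range_comp]
  rw [h2, Matrix.rank]

/-- rank symmetry: transpose trick -/
lemma rank_symm (L : ι → ℤ) (t : ι → ι → ℂ)
    (hgrad : ∀ i j, t i j ≠ 0 → L i = L j + 1) (m : ℤ) :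
    (Amat (fun i j => t j i) * Pmat L m).rank = (Amat t * Pmat L (m - 1)).rank := by
  have hT : Amat (fun i j => t j i) * Pmat L m = (Amat t * Pmat L (m - 1))ᵀ := by
    ext i j
    simp only [Pmat, Matrix.mul_diagonal, Matrix.transpose_apply, Amat, Matrix.of_apply]
    rcases eq_or_ne (t j i) 0 with h | h
    · simp [h]
    · have := hgrad j i h
      by_cases hj : L j = m
      · have : L i = m - 1 := by omega
        simp [hj, this]
      · have : L i ≠ m - 1 := by omega
        simp [hj, this]
  rw [hT, Matrix.rank_transpose]

/-- the differential squares to zero -/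
lemma aD_comp_aD (t : ι → ι → ℂ) (hsq : ∀ i j, ∑ w : ι, t i w * t w j = 0)
    (g : ι →₀ ℂ) : aD t (aD t g) = 0 := by
  have hAA : Amat t * Amat t = 0 := by
    ext i j
    simp only [Matrix.mul_apply, Amat, Matrix.of_apply, Matrix.zero_apply]
    exact hsq i j
  have : ⇑(aD t (aD t g)) = ⇑(0 : ι →₀ ℂ) := by
    rw [aD_coe, aD_coe, Matrix.mulVec_mulVec, hAA]
    simp [Matrix.zero_mulVec]
  exact DFunLike.coe_injective this

lemma aB_le_aZ (L : ι → ℤ) (t : ι → ι → ℂ)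
    (hgrad : ∀ i j, t i j ≠ 0 → L i = L j + 1)
    (hsq : ∀ i j, ∑ w : ι, t i w * t w j = 0) (q : ℤ) :
    aB L t q ≤ aZ L t q := by
  rintro x ⟨g, hg, rfl⟩
  refine ⟨?_, ?_⟩
  · -- in aC L q
    rw [aC, SetLike.mem_coe, Finsupp.mem_supported']
    intro i hi
    have hi' : L i ≠ q := hi
    rw [aD_apply]
    apply Finset.sum_eq_zero
    intro j _
    rcases eq_or_ne (t i j) 0 with h | h
    · simp [h]
    · rcases eq_or_ne (g j) 0 with h2 | h2
      · simp [h2]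
      · exfalso
        have hj : j ∈ g.support := Finsupp.mem_support_iff.mpr h2
        have : L j = q - 1 := (Finsupp.mem_supported ℂ g).mp hg hj
        have := hgrad i j h
        omega
  · exact LinearMap.mem_ker.mpr (aD_comp_aD t hsq g)

lemma finrank_comap_subtype {M : Type*} [AddCommGroup M] [Module ℂ M]
    (p K : Submodule ℂ M) :
    finrank ℂ (Submodule.comap p.subtype K) = finrank ℂ ↥(p ⊓ K) := by
  rw [← Submodule.map_comap_subtype]
  exact LinearEquiv.finrank_eq
    (Submodule.equivMapOfInjective p.subtype (Submodule.injective_subtype p) (Submodule.comap p.subtype K))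

lemma finrank_map_mkQ_add {M : Type*} [AddCommGroup M] [Module ℂ M] [FiniteDimensional ℂ M]
    (p B : Submodule ℂ M) (hBp : B ≤ p) :
    finrank ℂ (p.map B.mkQ) + finrank ℂ B = finrank ℂ p := by
  have h : finrank ℂ (LinearMap.range (B.mkQ.domRestrict p))
      + finrank ℂ (LinearMap.ker (B.mkQ.domRestrict p)) = finrank ℂ p :=
    LinearMap.finrank_range_add_finrank_ker _
  rwa [LinearMap.range_domRestrict, LinearMap.ker_domRestrict, Submodule.ker_mkQ,
    finrank_comap_subtype, inf_eq_right.mpr hBp] at h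

lemma finrank_map_add_inf_ker {M N : Type*} [AddCommGroup M] [Module ℂ M]
    [FiniteDimensional ℂ M] [AddCommGroup N] [Module ℂ N]
    (p : Submodule ℂ M) (f : M →ₗ[ℂ] N) :
    finrank ℂ (p.map f) + finrank ℂ ↥(p ⊓ LinearMap.ker f) = finrank ℂ p := by
  have h : finrank ℂ (LinearMap.range (f.domRestrict p))
      + finrank ℂ (LinearMap.ker (f.domRestrict p)) = finrank ℂ p :=
    LinearMap.finrank_range_add_finrank_ker _
  rwa [LinearMap.range_domRestrict, LinearMap.ker_domRestrict,
    finrank_comap_subtype] at h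

lemma aDim_formula (L : ι → ℤ) (t : ι → ι → ℂ)
    (hgrad : ∀ i j, t i j ≠ 0 → L i = L j + 1)
    (hsq : ∀ i j, ∑ w : ι, t i w * t w j = 0) (q : ℤ) :
    aDim L t q + finrank ℂ (aB L t (q+1)) + finrank ℂ (aB L t q)
      = finrank ℂ (aC L q) := by
  haveI : Module.Finite ℂ (ι →₀ ℂ) :=
    Module.Finite.equiv (Finsupp.linearEquivFunOnFinite ℂ ℂ ι).symm
  have hBZ : aB L t q ≤ aZ L t q := aB_le_aZ L t hgrad hsq q
  have h1 : aDim L t q + finrank ℂ (aB L t q) = finrank ℂ (aZ L t q) :=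
    finrank_map_mkQ_add (aZ L t q) (aB L t q) hBZ
  have h2 : finrank ℂ (aB L t (q+1)) + finrank ℂ (aZ L t q) = finrank ℂ (aC L q) := by
    have h := finrank_map_add_inf_ker (aC L q) (aD t)
    have hq : q + 1 - 1 = q := by ring
    rw [aB, hq]
    exact h
  omega

lemma finrank_aC_eq (L : ι → ℤ) (q : ℤ) :
    finrank ℂ (aC L q) = Fintype.card {i : ι // L i = q} := by
  classical
  have e1 : ↥(aC L q) ≃ₗ[ℂ] ({i : ι | L i = q} →₀ ℂ) := Finsupp.supportedEquivFinsupp _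
  rw [LinearEquiv.finrank_eq e1, LinearEquiv.finrank_eq
    (Finsupp.linearEquivFunOnFinite ℂ ℂ {i : ι | L i = q}), finrank_pi]
  rfl

variable {ι' : Type*} [Fintype ι'] [DecidableEq ι']

lemma finrank_aB_dual (L : ι → ℤ) (t : ι → ι → ℂ) (L' : ι' → ℤ) (t' : ι' → ι' → ℂ)
    (e : ι ≃ ι') (N : ℤ)
    (hL : ∀ i, L' (e i) = N - L i)
    (ht : ∀ i j, t' (e i) (e j) = t j i)
    (hgrad : ∀ i j, t i j ≠ 0 → L i = L j + 1) (q' : ℤ) :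
    finrank ℂ (aB L' t' q') = finrank ℂ (aB L t (N - q' + 1)) := by
  rw [finrank_aB_eq_rank, finrank_aB_eq_rank]
  have hsub : (Amat t' * Pmat L' (q' - 1)).submatrix e e
      = Amat (fun i j => t j i) * Pmat L (N - q' + 1) := by
    ext i j
    simp only [Matrix.submatrix_apply, Pmat, Matrix.mul_diagonal, Amat, Matrix.of_apply,
      ht, hL]
    congr 1
    exact if_congr (by omega) rfl rfl
  calc (Amat t' * Pmat L' (q' - 1)).rank
      = ((Amat t' * Pmat L' (q' - 1)).submatrix e e).rank := (Matrix.rank_submatrix _ e e).symm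
    _ = (Amat (fun i j => t j i) * Pmat L (N - q' + 1)).rank := by rw [hsub]
    _ = (Amat t * Pmat L (N - q' + 1 - 1)).rank := rank_symm L t hgrad _

theorem aDuality (L : ι → ℤ) (t : ι → ι → ℂ) (L' : ι' → ℤ) (t' : ι' → ι' → ℂ)
    (e : ι ≃ ι') (N : ℤ)
    (hL : ∀ i, L' (e i) = N - L i)
    (ht : ∀ i j, t' (e i) (e j) = t j i)
    (hgrad : ∀ i j, t i j ≠ 0 → L i = L j + 1)
    (hsq : ∀ i j, ∑ w : ι, t i w * t w j = 0) (k : ℤ) :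
    aDim L t k = aDim L' t' (N - k) := by
  have hgrad' : ∀ i' j', t' i' j' ≠ 0 → L' i' = L' j' + 1 := by
    intro i' j' h
    obtain ⟨i, rfl⟩ := e.surjective i'
    obtain ⟨j, rfl⟩ := e.surjective j'
    rw [ht] at h
    have := hgrad j i h
    rw [hL, hL]; omega
  have hsq' : ∀ i' j', ∑ w' : ι', t' i' w' * t' w' j' = 0 := by
    intro i' j'
    obtain ⟨i, rfl⟩ := e.surjective i'
    obtain ⟨j, rfl⟩ := e.surjective j'
    rw [← Equiv.sum_comp e (fun w' => t' (e i) w' * t' w' (e j))]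
    simp only [ht]
    rw [← hsq j i]
    exact Finset.sum_congr rfl (fun w _ => mul_comm _ _)
  have hF := aDim_formula L t hgrad hsq k
  have hF' := aDim_formula L' t' hgrad' hsq' (N - k)
  have hC : finrank ℂ (aC L' (N - k)) = finrank ℂ (aC L k) := by
    rw [finrank_aC_eq, finrank_aC_eq]
    apply Fintype.card_congr
    exact (Equiv.subtypeEquiv e (by intro i; rw [hL]; omega)).symm
  have hB1 : finrank ℂ (aB L' t' (N - k + 1)) = finrank ℂ (aB L t k) := by
    have h := finrank_aB_dual L t L' t' e N hL ht hgrad (N - k + 1)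
    have h2 : N - (N - k + 1) + 1 = k := by ring
    rw [h, h2]
  have hB2 : finrank ℂ (aB L' t' (N - k)) = finrank ℂ (aB L t (k + 1)) := by
    have h := finrank_aB_dual L t L' t' e N hL ht hgrad (N - k)
    have h2 : N - (N - k) + 1 = k + 1 := by ring
    rw [h, h2]
  omega

end AbstractPart

section ConcretePart

lemma weyl_image (Φ : Finset E) (hrefl : ∀ α ∈ Φ, Φ.image (sigmaRefl α) = Φ) :
    ∀ g ∈ Weyl Φ, Φ.image ⇑g = Φ := by
  intro g hg
  induction hg using Subgroup.closure_induction with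
  | mem x hx => obtain ⟨α, hα, rfl⟩ := hx; exact hrefl α hα
  | one => rw [show ⇑(1 : E ≃ₗᵢ[ℝ] E) = id from rfl, Finset.image_id]
  | mul x y hx hy ihx ihy =>
      rw [show ⇑(x * y) = ⇑x ∘ ⇑y from rfl, ← Finset.image_image, ihy, ihx]
  | inv x hx ih =>
      conv_lhs => rw [← ih]
      rw [Finset.image_image]
      have h : ⇑x⁻¹ ∘ ⇑x = id := by funext v; simp
      rw [h, Finset.image_id]

lemma neg_mem_phi (Φ : Finset E)
    (hred : ∀ α ∈ Φ, {x : E | x ∈ Φ ∧ ∃ t : ℝ, x = t • α} = {α, -α})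
    {α : E} (hα : α ∈ Φ) : -α ∈ Φ := by
  have h := hred α hα
  have h2 : (-α) ∈ ({α, -α} : Set E) := by simp
  rw [← h] at h2
  exact h2.1

lemma pos_partition (Φ : Finset E)
    (hred : ∀ α ∈ Φ, {x : E | x ∈ Φ ∧ ∃ t : ℝ, x = t • α} = {α, -α})
    (f : E) (hf : ∀ α ∈ Φ, ⟪f, α⟫ ≠ 0)
    (Pos : Finset E) (hPos : Pos = Φ.filter fun α => 0 < ⟪f, α⟫) :
    Pos ∪ negSet Pos = Φ ∧ Disjoint Pos (negSet Pos) ∧ Pos ⊆ Φ := by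
  have hsub : Pos ⊆ Φ := by rw [hPos]; exact Finset.filter_subset _ _
  have hpos : ∀ x ∈ Pos, 0 < ⟪f, x⟫ := by
    intro x hx; rw [hPos] at hx; exact (Finset.mem_filter.mp hx).2
  have hnegval : ∀ x ∈ negSet Pos, ⟪f, x⟫ < 0 := by
    intro x hx
    obtain ⟨β, hβ, rfl⟩ := Finset.mem_image.mp hx
    have := hpos β hβ
    rw [inner_neg_right]
    linarith
  refine ⟨?_, ?_, hsub⟩
  · apply Finset.Subset.antisymm
    · apply Finset.union_subset hsub
      intro x hx
      obtain ⟨β, hβ, rfl⟩ := Finset.mem_image.mp hx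
      exact neg_mem_phi Φ hred (hsub hβ)
    · intro α hα
      rcases (hf α hα).lt_or_gt with h | h
      · apply Finset.mem_union_right
        have hnegα : -α ∈ Pos := by
          rw [hPos]
          refine Finset.mem_filter.mpr ⟨neg_mem_phi Φ hred hα, ?_⟩
          rw [inner_neg_right]; linarith
        exact Finset.mem_image.mpr ⟨-α, hnegα, by simp⟩
      · apply Finset.mem_union_left
        rw [hPos]; exact Finset.mem_filter.mpr ⟨hα, h⟩
  · rw [Finset.disjoint_left]
    intro x hx hx'
    have := hpos x hx
    have := hnegval x hx'
    linarith

lemma len_mul_w₀ (Φ : Finset E)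
    (hrefl : ∀ α ∈ Φ, Φ.image (sigmaRefl α) = Φ)
    (hred : ∀ α ∈ Φ, {x : E | x ∈ Φ ∧ ∃ t : ℝ, x = t • α} = {α, -α})
    (f : E) (hf : ∀ α ∈ Φ, ⟪f, α⟫ ≠ 0)
    (Pos : Finset E) (hPos : Pos = Φ.filter fun α => 0 < ⟪f, α⟫)
    (w₀ : E ≃ₗᵢ[ℝ] E) (hw₀ : Pos.image w₀ = negSet Pos)
    (v : E ≃ₗᵢ[ℝ] E) (hv : v ∈ Weyl Φ) :
    (len Pos (v * w₀) : ℤ) = (Pos.card : ℤ) - len Pos v := by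
  obtain ⟨hunion, hdisj, hsub⟩ := pos_partition Φ hred f hf Pos hPos
  -- image of negSet Pos under w₀ is Pos
  have hw₀neg : (negSet Pos).image ⇑w₀ = Pos := by
    rw [negSet, Finset.image_image]
    have h1 : (⇑w₀ ∘ fun x => -x) = (fun x => -x) ∘ ⇑w₀ := by
      funext x; simp
    rw [h1, ← Finset.image_image, hw₀, negSet, Finset.image_image]
    have h2 : ((fun x : E => -x) ∘ fun x => -x) = id := by funext x; simp
    rw [h2, Finset.image_id]
  have hkey : (negSet Pos).image ⇑(v * w₀) = Pos.image ⇑v := by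
    rw [show ⇑(v * w₀) = ⇑v ∘ ⇑w₀ from rfl, ← Finset.image_image, hw₀neg]
  have hvΦ : Φ.image ⇑v = Φ := weyl_image Φ hrefl v hv
  have hinj : Function.Injective ⇑v := v.injective
  have himg : Pos.image ⇑v ∪ (negSet Pos).image ⇑v = Φ := by
    rw [← Finset.image_union, hunion, hvΦ]
  have hdisj2 : Disjoint (Pos.image ⇑v) ((negSet Pos).image ⇑v) :=
    (Finset.disjoint_image hinj).mpr hdisj
  have hcard : (Pos ∩ Pos.image ⇑v).card + (Pos ∩ (negSet Pos).image ⇑v).card = Pos.card := by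
    rw [← Finset.card_union_of_disjoint
      (hdisj2.mono Finset.inter_subset_right Finset.inter_subset_right),
      ← Finset.inter_union_distrib_left, himg, Finset.inter_eq_left.mpr hsub]
  have h1 : len Pos (v * w₀) = (Pos ∩ Pos.image ⇑v).card := by
    rw [len, hkey]
  have h2 : len Pos v = (Pos ∩ (negSet Pos).image ⇑v).card := rfl
  omega

lemma bruhat_len_lt {Φ Pos : Finset E} {a b : E ≃ₗᵢ[ℝ] E}
    (h : Relation.TransGen (Arrow Φ Pos) a b) : len Pos b < len Pos a := by
  induction h with
  | single h => have := h.2; omega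
  | tail h1 h2 ih => have := h2.2; omega

lemma reflTrans_len_le {Φ Pos : Finset E} {a b : E ≃ₗᵢ[ℝ] E}
    (h : Relation.ReflTransGen (Arrow Φ Pos) a b) : len Pos b ≤ len Pos a := by
  induction h with
  | refl => exact le_refl _
  | tail h1 h2 ih => have := h2.2; omega

lemma arrow_of_gap {Φ Pos : Finset E} {a b : E ≃ₗᵢ[ℝ] E}
    (h : Relation.TransGen (Arrow Φ Pos) a b) (hl : len Pos a = len Pos b + 1) :
    Arrow Φ Pos a b := by
  obtain ⟨c, hac, hcb⟩ := Relation.TransGen.head'_iff.mp h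
  rcases Relation.ReflTransGen.cases_head hcb with rfl | ⟨d, hcd, hdb⟩
  · exact hac
  · exfalso
    have h2 := hac.2
    have h3 := hcd.2
    have h4 := reflTrans_len_le hdb
    omega

lemma sq_zero_concrete (Φ Pos : Finset E) [DecidableEq (E ≃ₗᵢ[ℝ] E)]
    (V : Finset (E ≃ₗᵢ[ℝ] E)) (hV : StarCond Φ Pos ↑V)
    (s : (E ≃ₗᵢ[ℝ] E) → (E ≃ₗᵢ[ℝ] E) → ℂ) (hs : IsSignFunction Φ Pos ↑V s)
    (x : E ≃ₗᵢ[ℝ] E) (hx : x ∈ V) (y : E ≃ₗᵢ[ℝ] E) (hy : y ∈ V) :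
    ∑ w ∈ V, s x w * s w y = 0 := by
  classical
  rw [← Finset.sum_filter_of_ne
    (p := fun w => Arrow Φ Pos x w ∧ Arrow Φ Pos w y) (f := fun w => s x w * s w y)
    (by
      intro w hw hne
      by_contra hc
      apply hne
      show s x w * s w y = 0
      rcases not_and_or.mp hc with h | h
      · rw [hs.2.1 x hx w hw h, zero_mul]
      · rw [hs.2.1 w hw y hy h, mul_zero])]
  set S := V.filter (fun w => Arrow Φ Pos x w ∧ Arrow Φ Pos w y) with hS
  rcases S.eq_empty_or_nonempty with hemp | ⟨w0, hw0⟩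
  · rw [hemp, Finset.sum_empty]
  · obtain ⟨hw0V, hw0x, hw0y⟩ :
        w0 ∈ V ∧ Arrow Φ Pos x w0 ∧ Arrow Φ Pos w0 y := by
      have := Finset.mem_filter.mp hw0
      exact ⟨this.1, this.2.1, this.2.2⟩
    have hlen : len Pos x = len Pos y + 2 := by
      have := hw0x.2; have := hw0y.2; omega
    have hsetEq : {w ∈ (↑V : Set (E ≃ₗᵢ[ℝ] E)) |
        BruhatLT Φ Pos y w ∧ BruhatLT Φ Pos w x} = (↑S : Set (E ≃ₗᵢ[ℝ] E)) := by
      ext w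
      simp only [Set.mem_setOf_eq, hS, Finset.coe_filter, Finset.mem_coe]
      constructor
      · rintro ⟨hwV, hyw, hwx⟩
        have h1 := bruhat_len_lt hyw
        have h2 := bruhat_len_lt hwx
        have hw1 : len Pos w = len Pos y + 1 := by omega
        exact ⟨hwV, arrow_of_gap hwx (by omega), arrow_of_gap hyw hw1⟩
      · rintro ⟨hwV, hxw, hwy⟩
        exact ⟨hwV, Relation.TransGen.single hwy, Relation.TransGen.single hxw⟩
    have hcard := hV x hx y hy hlen
    rw [hsetEq, Set.ncard_coe_finset] at hcard
    rcases hcard with h0 | h2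
    · exfalso
      rw [Finset.card_eq_zero.mp h0] at hw0
      exact absurd hw0 (Finset.notMem_empty w0)
    · obtain ⟨a, b, hab, hSab⟩ := Finset.card_eq_two.mp h2
      have haS : a ∈ S := by rw [hSab]; exact Finset.mem_insert_self a {b}
      have hbS : b ∈ S := by rw [hSab]; simp
      have haV := (Finset.mem_filter.mp haS).1
      have hbV := (Finset.mem_filter.mp hbS).1
      have haA := (Finset.mem_filter.mp haS).2
      have hbA := (Finset.mem_filter.mp hbS).2
      rw [hSab, Finset.sum_pair hab]
      exact hs.2.2 x hx y hy a haV b hbV hab haA.1 haA.2 hbA.1 hbA.2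

end ConcretePart
theorem statement7 [DecidableEq (E ≃ₗᵢ[ℝ] E)]
    (Φ : Finset E) (h0 : (0 : E) ∉ Φ)
    (hrefl : ∀ α ∈ Φ, Φ.image (sigmaRefl α) = Φ)
    (hred : ∀ α ∈ Φ, {x : E | x ∈ Φ ∧ ∃ t : ℝ, x = t • α} = {α, -α})
    (f : E) (hf : ∀ α ∈ Φ, ⟪f, α⟫ ≠ 0)
    (Pos : Finset E) (hPos : Pos = Φ.filter fun α => 0 < ⟪f, α⟫)
    (w₀ : E ≃ₗᵢ[ℝ] E) (hw₀W : w₀ ∈ Weyl Φ) (hw₀ : Pos.image w₀ = negSet Pos)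
    (V : Finset (E ≃ₗᵢ[ℝ] E)) (hVW : ↑V ⊆ (Weyl Φ : Set (E ≃ₗᵢ[ℝ] E)))
    (hV : StarCond Φ Pos ↑V)
    (s : (E ≃ₗᵢ[ℝ] E) → (E ≃ₗᵢ[ℝ] E) → ℂ) (hs : IsSignFunction Φ Pos ↑V s) :
    ∀ k : ℤ, cohomDim Pos V s k =
      cohomDim Pos (V.image fun v => v * w₀)
        (fun u v => s (v * w₀⁻¹) (u * w₀⁻¹)) ((Pos.card : ℤ) - k) := by
  intro k
  classical
  set V' := V.image (fun v => v * w₀) with hV'def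
  have hmem : ∀ i : ↥V, (↑i * w₀) ∈ V' := fun i => Finset.mem_image_of_mem _ i.2
  let e : ↥V ≃ ↥V' :=
    { toFun := fun i => ⟨↑i * w₀, hmem i⟩
      invFun := fun j => ⟨↑j * w₀⁻¹, by
        obtain ⟨a, ha, hav⟩ := Finset.mem_image.mp j.2
        rw [← hav]; simpa using ha⟩
      left_inv := fun i => Subtype.ext (by simp)
      right_inv := fun j => Subtype.ext (by simp) }
  have hL : ∀ i : ↥V, ((len Pos ↑(e i) : ℤ)) = (Pos.card : ℤ) - len Pos ↑i := by
    intro i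
    exact len_mul_w₀ Φ hrefl hred f hf Pos hPos w₀ hw₀ ↑i (hVW i.2)
  have ht : ∀ i j : ↥V,
      (fun i' j' : ↥V' => s (↑j' * w₀⁻¹) (↑i' * w₀⁻¹)) (e i) (e j) = s ↑j ↑i := by
    intro i j
    show s (↑j * w₀ * w₀⁻¹) (↑i * w₀ * w₀⁻¹) = s ↑j ↑i
    simp
  have hgrad : ∀ i j : ↥V, s ↑i ↑j ≠ 0 → (len Pos (↑i : E ≃ₗᵢ[ℝ] E) : ℤ) = (len Pos (↑j : E ≃ₗᵢ[ℝ] E) : ℤ) + 1 := by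
    intro i j hne
    by_cases hA : Arrow Φ Pos ↑i ↑j
    · exact_mod_cast hA.2
    · exact absurd (hs.2.1 ↑i i.2 ↑j j.2 hA) hne
  have hsq : ∀ i j : ↥V, ∑ w : ↥V, s ↑i ↑w * s ↑w ↑j = 0 := by
    intro i j
    rw [Finset.sum_coe_sort V (fun w => s ↑i w * s w ↑j)]
    exact sq_zero_concrete Φ Pos V hV s hs ↑i i.2 ↑j j.2
  have key := aDuality (fun i : ↥V => (len Pos ↑i : ℤ)) (fun i j : ↥V => s ↑i ↑j)
    (fun i' : ↥V' => (len Pos ↑i' : ℤ)) (fun i' j' : ↥V' => s (↑j' * w₀⁻¹) (↑i' * w₀⁻¹))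
    e (Pos.card : ℤ) hL ht hgrad hsq k
  exact key
end
end

section
/- Assume no simple root is compact, i.e. Σ ∩ Φ_K = ∅. Let A, D ⊆ W be subsets containing the identity e of W, set 𝒱(A,D,0) = {w ∈ A ∩ D : l(w) = l_K(w)}, assume 𝒱(A,D,0) satisfies condition (⋆), and let s be a sign function for 𝒱(A,D,0). Then the degree-zero differential d : C⁰𝒱(A,D,0) → C¹𝒱(A,D,0) is the zero map, and H⁰(𝒱(A,D,0)) is one-dimensional, spanned by the class of the basis element e; in particular H⁰(𝒱(A,D,0)) ≠ 0. -/
open Finset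
open scoped RealInnerProductSpace

noncomputable section

variable {E : Type*} [NormedAddCommGroup E] [InnerProductSpace ℝ E] [FiniteDimensional ℝ E]

lemma sigmaRefl_apply (α v : E) :
    sigmaRefl α v = v - (2 * ⟪v, α⟫ / ⟪α, α⟫) • α := by
  rcases eq_or_ne α 0 with rfl | hα
  · simp [sigmaRefl, Submodule.span_zero_singleton, Submodule.reflection_mem_subspace_eq_self
      (Submodule.mem_top (x := v))]
  · rw [sigmaRefl, Submodule.reflection_orthogonal_apply, Submodule.reflection_singleton_apply]
    rw [real_inner_self_eq_norm_sq α, real_inner_comm]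
    push_cast
    rw [mul_div_assoc, two_mul, add_smul]
    simp only [RCLike.ofReal_real_eq_id, id_eq]
    abel

lemma sigmaRefl_self (α : E) : sigmaRefl α α = -α :=
  Submodule.reflection_orthogonalComplement_singleton_eq_neg α

lemma sigmaRefl_neg (α : E) : sigmaRefl (-α) = sigmaRefl α := by
  ext v
  simp [sigmaRefl_apply, inner_neg_neg, inner_neg_right, neg_div, smul_neg, neg_smul]

lemma sigmaRefl_conj (u : E ≃ₗᵢ[ℝ] E) (α : E) :
    sigmaRefl (u α) = u * sigmaRefl α * u⁻¹ := by
  ext v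
  have h1 : (u * sigmaRefl α * u⁻¹) v = u (sigmaRefl α (u.symm v)) := rfl
  rw [h1, sigmaRefl_apply, sigmaRefl_apply, map_sub, map_smul, u.apply_symm_apply]
  have h2 : ⟪u.symm v, α⟫ = ⟪v, u α⟫ := by
    rw [← u.inner_map_map (u.symm v) α, u.apply_symm_apply]
  have h3 : ⟪u α, u α⟫ = ⟪α, α⟫ := u.inner_map_map α α
  rw [h2, h3]


variable [DecidableEq E]

/-- Bundle of the root-system hypotheses. -/
structure RSys (Φ : Finset E) (f : E) (Pos : Finset E) : Prop where
  h0 : (0:E) ∉ Φ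
  hrefl : ∀ α ∈ Φ, Φ.image (sigmaRefl α) = Φ
  hred : ∀ α ∈ Φ, {x : E | x ∈ Φ ∧ ∃ t : ℝ, x = t • α} = {α, -α}
  hf : ∀ α ∈ Φ, ⟪f, α⟫ ≠ 0
  hPos : Pos = Φ.filter fun α => 0 < ⟪f, α⟫

namespace RSys

variable {Φ : Finset E} {f : E} {Pos : Finset E} (h : RSys Φ f Pos)
include h

lemma neg_mem {α : E} (hα : α ∈ Φ) : -α ∈ Φ := by
  have h2 : -α ∈ ({α, -α} : Set E) := by simp
  rw [← h.hred α hα] at h2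
  exact h2.1

lemma mem_Pos {α : E} : α ∈ Pos ↔ α ∈ Φ ∧ 0 < ⟪f, α⟫ := by
  rw [h.hPos, Finset.mem_filter]

lemma Pos_sub : Pos ⊆ Φ := fun α hα => ((h.mem_Pos).1 hα).1

lemma mem_neg {α : E} : α ∈ negSet Pos ↔ α ∈ Φ ∧ ⟪f, α⟫ < 0 := by
  unfold negSet
  simp only [Finset.mem_image]
  constructor
  · rintro ⟨β, hβ, rfl⟩
    obtain ⟨hβΦ, hβf⟩ := (h.mem_Pos).1 hβ
    exact ⟨h.neg_mem hβΦ, by rw [inner_neg_right]; linarith⟩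
  · rintro ⟨hΦ, hneg⟩
    refine ⟨-α, (h.mem_Pos).2 ⟨h.neg_mem hΦ, by rw [inner_neg_right]; linarith⟩, by simp⟩

lemma dichotomy {α : E} (hα : α ∈ Φ) : α ∈ Pos ∨ α ∈ negSet Pos := by
  rcases lt_trichotomy (0:ℝ) ⟪f, α⟫ with h1 | h1 | h1
  · exact Or.inl ((h.mem_Pos).2 ⟨hα, h1⟩)
  · exact absurd h1.symm (h.hf α hα)
  · exact Or.inr ((h.mem_neg).2 ⟨hα, h1⟩)

lemma not_both {α : E} (hα : α ∈ Pos) : α ∉ negSet Pos := by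
  intro hn
  have h1 := ((h.mem_Pos).1 hα).2
  have h2 := ((h.mem_neg).1 hn).2
  linarith

lemma neg_mem_Pos {α : E} (hα : α ∈ negSet Pos) : -α ∈ Pos := by
  obtain ⟨hΦ, hneg⟩ := (h.mem_neg).1 hα
  exact (h.mem_Pos).2 ⟨h.neg_mem hΦ, by rw [inner_neg_right]; linarith⟩

lemma ne_zero {α : E} (hα : α ∈ Φ) : α ≠ 0 := fun h' => h.h0 (h' ▸ hα)

lemma inner_self_pos' {α : E} (hα : α ∈ Φ) : 0 < ⟪α, α⟫ :=
  lt_of_not_ge fun hle => h.ne_zero hα (real_inner_self_nonpos.1 hle)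

lemma sigma_maps {α β : E} (hα : α ∈ Φ) (hβ : β ∈ Φ) : sigmaRefl α β ∈ Φ := by
  rw [← h.hrefl α hα]
  exact Finset.mem_image_of_mem _ hβ

lemma weyl_maps' : ∀ w ∈ Weyl Φ, (∀ α ∈ Φ, w α ∈ Φ) ∧ (∀ α ∈ Φ, w⁻¹ α ∈ Φ) := by
  intro w hw
  induction hw using Subgroup.closure_induction with
  | mem x hx =>
    obtain ⟨α, hα, rfl⟩ := hx
    have hinv : (sigmaRefl α)⁻¹ = sigmaRefl α := Submodule.reflection_inv
    exact ⟨fun β hβ => h.sigma_maps hα hβ, fun β hβ => by rw [hinv]; exact h.sigma_maps hα hβ⟩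
  | one => exact ⟨fun α hα => hα, fun α hα => hα⟩
  | mul x y hx hy ihx ihy =>
    refine ⟨fun α hα => ihx.1 _ (ihy.1 _ hα), fun α hα => ?_⟩
    have : (x*y)⁻¹ α = y⁻¹ (x⁻¹ α) := rfl
    rw [this]; exact ihy.2 _ (ihx.2 _ hα)
  | inv x hx ih => exact ⟨ih.2, by simpa using ih.1⟩

lemma weyl_maps {w : E ≃ₗᵢ[ℝ] E} (hw : w ∈ Weyl Φ) {α : E} (hα : α ∈ Φ) : w α ∈ Φ :=
  (h.weyl_maps' w hw).1 α hα

lemma sigma_mem_weyl {α : E} (hα : α ∈ Φ) : sigmaRefl α ∈ Weyl Φ :=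
  Subgroup.subset_closure ⟨α, hα, rfl⟩

end RSys

/-- Nonnegative combination of elements of a finite set. -/
def IsConeCombo (S : Finset E) (x : E) : Prop :=
  ∃ c : E → ℝ, (∀ y, 0 ≤ c y) ∧ x = ∑ y ∈ S, c y • y

lemma isConeCombo_self {S : Finset E} {y : E} (hy : y ∈ S) : IsConeCombo S y := by
  refine ⟨fun z => if z = y then 1 else 0, fun z => by positivity, ?_⟩
  simp only [ite_smul, one_smul, zero_smul]
  rw [Finset.sum_ite_eq' S y (fun z => z)]
  simp [hy]

lemma isConeCombo_add {S : Finset E} {x y : E} (hx : IsConeCombo S x) (hy : IsConeCombo S y) :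
    IsConeCombo S (x + y) := by
  obtain ⟨c, hc, rfl⟩ := hx
  obtain ⟨d, hd, rfl⟩ := hy
  exact ⟨fun z => c z + d z, fun z => add_nonneg (hc z) (hd z), by
    rw [← Finset.sum_add_distrib]; exact Finset.sum_congr rfl fun z _ => (add_smul _ _ _).symm⟩

lemma isConeCombo_smul {S : Finset E} {x : E} {t : ℝ} (ht : 0 ≤ t) (hx : IsConeCombo S x) :
    IsConeCombo S (t • x) := by
  obtain ⟨c, hc, rfl⟩ := hx
  exact ⟨fun z => t * c z, fun z => mul_nonneg ht (hc z), by
    rw [Finset.smul_sum]; exact Finset.sum_congr rfl fun z _ => (mul_smul _ _ _).symm⟩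

lemma isConeCombo_of_smul {S : Finset E} {x : E} {t : ℝ} (ht : 0 < t)
    (hx : IsConeCombo S (t • x)) : IsConeCombo S x := by
  have := isConeCombo_smul (le_of_lt (inv_pos.2 ht)) hx
  rwa [inv_smul_smul₀ (ne_of_gt ht)] at this

lemma isConeCombo_sum {S : Finset E} {d : E → ℝ} (hd : ∀ y, 0 ≤ d y) :
    IsConeCombo S (∑ y ∈ S, d y • y) := ⟨d, hd, rfl⟩

lemma isConeCombo_erase {S : Finset E} {β x : E} (hβ : IsConeCombo (S.erase β) β)
    (hx : IsConeCombo S x) : IsConeCombo (S.erase β) x := by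
  by_cases hmem : β ∈ S
  · obtain ⟨c, hc, rfl⟩ := hx
    rw [← Finset.sum_erase_add S _ hmem]
    exact isConeCombo_add (isConeCombo_sum hc) (isConeCombo_smul (hc β) hβ)
  · rw [Finset.erase_eq_of_notMem hmem] at hβ ⊢
    exact hx

lemma RSys.obtuse_zero {Φ : Finset E} {f : E} {Pos : Finset E} (h : RSys Φ f Pos)
    {Δ : Finset E} (hΔPos : Δ ⊆ Pos)
    (hobt : ∀ α ∈ Δ, ∀ β ∈ Δ, α ≠ β → ⟪α, β⟫ ≤ 0)
    {e : E → ℝ} {α : E} (hα : α ∈ Δ) (he : ∀ γ ∈ Δ, γ ≠ α → 0 ≤ e γ)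
    (hsum : ∑ γ ∈ Δ, e γ • γ = 0) : ∀ γ ∈ Δ, e γ = 0 := by
  classical
  set u := ∑ γ ∈ Δ.erase α, e γ • γ with hu
  have hsplit : u + e α • α = 0 := by rw [hu, Finset.sum_erase_add Δ _ hα]; exact hsum
  have hue : u = (-(e α)) • α := by
    rw [neg_smul]
    exact eq_neg_of_add_eq_zero_left hsplit
  have hfpos : ∀ γ ∈ Δ, 0 < ⟪f, γ⟫ := fun γ hγ => ((h.mem_Pos).1 (hΔPos hγ)).2
  have hfu : ⟪f, u⟫ = ∑ γ ∈ Δ.erase α, e γ * ⟪f, γ⟫ := by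
    rw [hu, inner_sum]
    exact Finset.sum_congr rfl fun γ _ => real_inner_smul_right f γ (e γ)
  have h1 : 0 ≤ ⟪f, u⟫ := by
    rw [hfu]
    apply Finset.sum_nonneg
    intro γ hγ
    obtain ⟨hγne, hγΔ⟩ := Finset.mem_erase.1 hγ
    exact mul_nonneg (he γ hγΔ hγne) (hfpos γ hγΔ).le
  have h2 : ⟪f, u⟫ = (-(e α)) * ⟪f, α⟫ := by rw [hue, real_inner_smul_right]
  have hea : 0 ≤ -(e α) := by nlinarith [hfpos α hα]
  have huu : ⟪u, u⟫ ≤ 0 := by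
    have hexp : ⟪u, u⟫ = ∑ γ ∈ Δ.erase α, e γ * ((-(e α)) * ⟪γ, α⟫) := by
      nth_rewrite 2 [hue]
      nth_rewrite 1 [hu]
      rw [sum_inner]
      refine Finset.sum_congr rfl fun γ _ => ?_
      rw [real_inner_smul_left, real_inner_smul_right]
    rw [hexp]
    apply Finset.sum_nonpos
    intro γ hγ
    obtain ⟨hγne, hγΔ⟩ := Finset.mem_erase.1 hγ
    exact mul_nonpos_of_nonneg_of_nonpos (he γ hγΔ hγne)
      (mul_nonpos_of_nonneg_of_nonpos hea (hobt γ hγΔ α hα hγne))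
  have hu0 : u = 0 := real_inner_self_nonpos.1 huu
  have h3 : ∀ γ ∈ Δ.erase α, e γ = 0 := by
    have hz : ∑ γ ∈ Δ.erase α, e γ * ⟪f, γ⟫ = 0 := by
      rw [← hfu, hu0, inner_zero_right]
    intro γ hγ
    obtain ⟨hγne, hγΔ⟩ := Finset.mem_erase.1 hγ
    have := (Finset.sum_eq_zero_iff_of_nonneg (fun δ hδ => by
      obtain ⟨hδne, hδΔ⟩ := Finset.mem_erase.1 hδ
      exact mul_nonneg (he δ hδΔ hδne) (hfpos δ hδΔ).le)).1 hz γ hγ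
    rcases mul_eq_zero.1 this with h' | h'
    · exact h'
    · exact absurd h' (ne_of_gt (hfpos γ hγΔ))
  have h4 : e α = 0 := by
    have hz : (-(e α)) • α = 0 := by rw [← hue, hu0]
    rcases smul_eq_zero.1 hz with h' | h'
    · linarith [neg_eq_zero.1 h']
    · exact absurd h' (h.ne_zero (h.Pos_sub (hΔPos hα)))
  intro γ hγ
  by_cases hγα : γ = α
  · rw [hγα]; exact h4
  · exact h3 γ (Finset.mem_erase.2 ⟨hγα, hγ⟩)

theorem RSys.exists_delta {Φ : Finset E} {f : E} {Pos : Finset E} (h : RSys Φ f Pos) :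
    ∃ Δ : Finset E, Δ ⊆ Pos ∧ (∀ x ∈ Pos, IsConeCombo Δ x) ∧
      (∀ α ∈ Δ, ∀ β ∈ Δ, α ≠ β → ⟪α, β⟫ ≤ 0) := by
  classical
  have hex : ∃ n, ∃ S : Finset E, S ⊆ Pos ∧ S.card = n ∧ ∀ x ∈ Pos, IsConeCombo S x :=
    ⟨Pos.card, Pos, Finset.Subset.refl _, rfl, fun x hx => isConeCombo_self hx⟩
  obtain ⟨Δ, hΔPos, hcard, hspan⟩ := Nat.find_spec hex
  refine ⟨Δ, hΔPos, hspan, ?_⟩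
  have hmin : ∀ β ∈ Δ, ¬ IsConeCombo (Δ.erase β) β := by
    intro β hβ hcc
    have hlt : (Δ.erase β).card < Nat.find hex := by
      rw [Finset.card_erase_of_mem hβ, ← hcard]
      exact Nat.sub_lt (Finset.card_pos.2 ⟨β, hβ⟩) one_pos
    exact Nat.find_min hex hlt ⟨Δ.erase β, (Finset.erase_subset _ _).trans hΔPos, rfl,
      fun x hx => isConeCombo_erase hcc (hspan x hx)⟩
  intro α hα β hβ hne
  by_contra hpos
  push_neg at hpos
  have hαΦ : α ∈ Φ := h.Pos_sub (hΔPos hα)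
  have hβΦ : β ∈ Φ := h.Pos_sub (hΔPos hβ)
  set c : ℝ := 2 * ⟪β, α⟫ / ⟪α, α⟫ with hc
  have hcpos : 0 < c := by
    apply div_pos _ (h.inner_self_pos' hαΦ)
    rw [real_inner_comm]
    linarith
  have hσ : sigmaRefl α β = β - c • α := sigmaRefl_apply α β
  have hσΦ : β - c • α ∈ Φ := hσ ▸ h.sigma_maps hαΦ hβΦ
  have hfα : 0 < ⟪f, α⟫ := ((h.mem_Pos).1 (hΔPos hα)).2
  have hfβ : 0 < ⟪f, β⟫ := ((h.mem_Pos).1 (hΔPos hβ)).2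
  have hfpos : ∀ γ ∈ Δ, 0 < ⟪f, γ⟫ := fun γ hγ => ((h.mem_Pos).1 (hΔPos hγ)).2
  rcases h.dichotomy hσΦ with hP | hN
  · obtain ⟨d, hd0, hdsum⟩ := hspan _ hP
    have hsplit : β - c • α = (∑ γ ∈ Δ.erase β, d γ • γ) + d β • β := by
      rw [Finset.sum_erase_add Δ _ hβ]; exact hdsum
    by_cases ht : d β < 1
    · apply hmin β hβ
      have key : (1 - d β) • β = c • α + ∑ γ ∈ Δ.erase β, d γ • γ := by
        rw [sub_smul, one_smul]
        linear_combination (norm := module) hsplit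
      apply isConeCombo_of_smul (by linarith : (0:ℝ) < 1 - d β)
      rw [key]
      exact isConeCombo_add
        (isConeCombo_smul hcpos.le (isConeCombo_self (Finset.mem_erase.2 ⟨hne, hα⟩)))
        (isConeCombo_sum hd0)
    · push_neg at ht
      have hfsum : ⟪f, β - c • α⟫ = ∑ γ ∈ Δ, d γ * ⟪f, γ⟫ := by
        rw [hdsum, inner_sum]
        exact Finset.sum_congr rfl fun γ _ => real_inner_smul_right f γ (d γ)
      have hge : d β * ⟪f, β⟫ ≤ ∑ γ ∈ Δ, d γ * ⟪f, γ⟫ :=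
        Finset.single_le_sum (fun γ hγ => mul_nonneg (hd0 γ) (hfpos γ hγ).le) hβ
      rw [inner_sub_right, real_inner_smul_right] at hfsum
      nlinarith
  · have hP2 : c • α - β ∈ Pos := by
      have := h.neg_mem_Pos hN
      rwa [neg_sub] at this
    obtain ⟨d, hd0, hdsum⟩ := hspan _ hP2
    have hsplit : c • α - β = (∑ γ ∈ Δ.erase α, d γ • γ) + d α • α := by
      rw [Finset.sum_erase_add Δ _ hα]; exact hdsum
    by_cases ht : d α < c
    · apply hmin α hα
      have key : (c - d α) • α = β + ∑ γ ∈ Δ.erase α, d γ • γ := by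
        rw [sub_smul]
        linear_combination (norm := module) hsplit
      apply isConeCombo_of_smul (by linarith : (0:ℝ) < c - d α)
      rw [key]
      exact isConeCombo_add (isConeCombo_self (Finset.mem_erase.2 ⟨hne.symm, hβ⟩))
        (isConeCombo_sum hd0)
    · push_neg at ht
      have hfsum : ⟪f, c • α - β⟫ = ∑ γ ∈ Δ, d γ * ⟪f, γ⟫ := by
        rw [hdsum, inner_sum]
        exact Finset.sum_congr rfl fun γ _ => real_inner_smul_right f γ (d γ)
      have hge : d α * ⟪f, α⟫ ≤ ∑ γ ∈ Δ, d γ * ⟪f, γ⟫ :=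
        Finset.single_le_sum (fun γ hγ => mul_nonneg (hd0 γ) (hfpos γ hγ).le) hα
      rw [inner_sub_right, real_inner_smul_right] at hfsum
      nlinarith

lemma sigmaRefl_mul_self (β : E) : sigmaRefl β * sigmaRefl β = 1 :=
  Submodule.reflection_mul_reflection _

lemma linIsomInv_apply (w : E ≃ₗᵢ[ℝ] E) (x : E) : (w⁻¹) x = w.symm x := rfl

/-- Bundle of hypotheses about the simple system `Δ`. -/
structure DSys (Φ : Finset E) (f : E) (Pos Δ : Finset E) extends RSys Φ f Pos : Prop where
  hΔPos : Δ ⊆ Pos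
  hspan : ∀ x ∈ Pos, IsConeCombo Δ x
  hobt : ∀ α ∈ Δ, ∀ β ∈ Δ, α ≠ β → ⟪α, β⟫ ≤ 0

namespace DSys

variable {Φ : Finset E} {f : E} {Pos Δ : Finset E} (hd : DSys Φ f Pos Δ)
include hd

lemma sigma_perm {α β : E} (hα : α ∈ Δ) (hβ : β ∈ Pos) (hne : β ≠ α) :
    sigmaRefl α β ∈ Pos := by
  classical
  have h := hd.toRSys
  have hαΦ : α ∈ Φ := h.Pos_sub (hd.hΔPos hα)
  have hβΦ : β ∈ Φ := h.Pos_sub hβ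
  set c : ℝ := 2 * ⟪β, α⟫ / ⟪α, α⟫ with hc
  have hσ : sigmaRefl α β = β - c • α := sigmaRefl_apply α β
  have hσΦ : β - c • α ∈ Φ := hσ ▸ h.sigma_maps hαΦ hβΦ
  rcases h.dichotomy hσΦ with hP | hN
  · rwa [hσ]
  exfalso
  obtain ⟨b, hb0, hbsum⟩ := hd.hspan β hβ
  have hP2 : c • α - β ∈ Pos := by
    have := h.neg_mem_Pos hN
    rwa [neg_sub] at this
  obtain ⟨d, hd0, hdsum⟩ := hd.hspan _ hP2
  set e : E → ℝ := fun γ => b γ + d γ - (if γ = α then c else 0) with he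
  have h1 : ∑ γ ∈ Δ, (if γ = α then c else 0) • γ = c • α := by
    simp only [ite_smul, zero_smul]
    rw [Finset.sum_ite_eq' Δ α (fun γ => c • γ)]
    simp [hα]
  have hesum : ∑ γ ∈ Δ, e γ • γ = 0 := by
    have : ∀ γ ∈ Δ, e γ • γ = b γ • γ + d γ • γ - (if γ = α then c else 0) • γ := by
      intro γ _
      rw [he]
      rw [sub_smul, add_smul]
    rw [Finset.sum_congr rfl this, Finset.sum_sub_distrib, Finset.sum_add_distrib,
      ← hbsum, ← hdsum, h1]
    abel
  have hzero := h.obtuse_zero hd.hΔPos hd.hobt hα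
    (fun γ _ hγα => by
      rw [he]; simp only [if_neg hγα]
      have := hb0 γ; have := hd0 γ; linarith) hesum
  have hb_zero : ∀ γ ∈ Δ, γ ≠ α → b γ = 0 := by
    intro γ hγ hγα
    have := hzero γ hγ
    rw [he] at this
    simp only [if_neg hγα] at this
    have := hb0 γ; have := hd0 γ; linarith
  have hβα : β = b α • α := by
    rw [hbsum, ← Finset.sum_erase_add Δ _ hα]
    rw [Finset.sum_eq_zero, zero_add]
    intro γ hγ
    obtain ⟨hγα, hγΔ⟩ := Finset.mem_erase.1 hγ
    rw [hb_zero γ hγΔ hγα, zero_smul]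
  have hmem : β ∈ ({α, -α} : Set E) := by
    rw [← h.hred α hαΦ]
    exact ⟨hβΦ, b α, hβα⟩
  rcases hmem with h' | h'
  · exact hne h'
  · have hfβ : 0 < ⟪f, β⟫ := ((h.mem_Pos).1 hβ).2
    have hfα : 0 < ⟪f, α⟫ := ((h.mem_Pos).1 (hd.hΔPos hα)).2
    rw [Set.mem_singleton_iff] at h'
    rw [h', inner_neg_right] at hfβ
    linarith

lemma exists_inner_pos {γ : E} (hγ : γ ∈ Pos) : ∃ δ ∈ Δ, 0 < ⟪γ, δ⟫ := by
  by_contra hcon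
  push_neg at hcon
  obtain ⟨c, hc0, hcsum⟩ := hd.hspan γ hγ
  have h1 : ⟪γ, γ⟫ ≤ 0 := by
    nth_rewrite 2 [hcsum]
    rw [inner_sum]
    apply Finset.sum_nonpos
    intro δ hδ
    rw [real_inner_smul_right]
    exact mul_nonpos_of_nonneg_of_nonpos (hc0 δ) (hcon δ hδ)
  exact hd.toRSys.ne_zero (hd.toRSys.Pos_sub hγ) (real_inner_self_nonpos.1 h1)

end DSys

def Wgen (Δ : Finset E) : Subgroup (E ≃ₗᵢ[ℝ] E) :=
  Subgroup.closure {g | ∃ δ ∈ Δ, g = sigmaRefl δ}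

namespace DSys

variable {Φ : Finset E} {f : E} {Pos Δ : Finset E} (hd : DSys Φ f Pos Δ)
include hd

lemma refl_mem_Wgen {β : E} (hβ : β ∈ Φ) : sigmaRefl β ∈ Wgen Δ := by
  classical
  have h := hd.toRSys
  suffices hp : ∀ β ∈ Pos, sigmaRefl β ∈ Wgen Δ by
    rcases h.dichotomy hβ with h1 | h1
    · exact hp β h1
    · have := hp (-β) (h.neg_mem_Pos h1)
      rwa [sigmaRefl_neg β] at this
  clear hβ
  intro β hβ
  set S := Pos.filter (fun γ => ∃ w ∈ Wgen Δ, w β = γ) with hS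
  have hβS : β ∈ S := Finset.mem_filter.2 ⟨hβ, 1, one_mem _, rfl⟩
  obtain ⟨γ, hγS, hminγ⟩ := S.exists_min_image (fun γ => ⟪f, γ⟫) ⟨β, hβS⟩
  obtain ⟨hγPos, w, hwW, hwβ⟩ := Finset.mem_filter.1 hγS
  obtain ⟨δ, hδΔ, hδpos⟩ := hd.exists_inner_pos hγPos
  by_cases hγδ : γ = δ
  · have hβeq : β = (w⁻¹) γ := by rw [linIsomInv_apply, ← hwβ, w.symm_apply_apply]
    have hw2 : sigmaRefl β = w⁻¹ * sigmaRefl γ * (w⁻¹)⁻¹ := by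
      rw [hβeq]; exact sigmaRefl_conj w⁻¹ γ
    rw [hw2]
    exact mul_mem (mul_mem (inv_mem hwW)
      (Subgroup.subset_closure ⟨γ, hγδ ▸ hδΔ, rfl⟩)) (inv_mem (inv_mem hwW))
  · exfalso
    have hσγ : sigmaRefl δ γ ∈ Pos := hd.sigma_perm hδΔ hγPos hγδ
    have hmem : sigmaRefl δ γ ∈ S := by
      refine Finset.mem_filter.2 ⟨hσγ, sigmaRefl δ * w, mul_mem
        (Subgroup.subset_closure ⟨δ, hδΔ, rfl⟩) hwW, ?_⟩
      show (sigmaRefl δ) (w β) = _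
      rw [hwβ]
    have hδΦ : δ ∈ Φ := h.Pos_sub (hd.hΔPos hδΔ)
    have hfδ : 0 < ⟪f, δ⟫ := ((h.mem_Pos).1 (hd.hΔPos hδΔ)).2
    have hlt : ⟪f, sigmaRefl δ γ⟫ < ⟪f, γ⟫ := by
      rw [sigmaRefl_apply δ γ, inner_sub_right, real_inner_smul_right]
      have hcpos : 0 < 2 * ⟪γ, δ⟫ / ⟪δ, δ⟫ :=
        div_pos (by linarith) (h.inner_self_pos' hδΦ)
      nlinarith
    exact absurd (hminγ _ hmem) (not_le.2 hlt)

lemma weyl_le_Wgen : Weyl Φ ≤ Wgen Δ := by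
  rw [Weyl, Subgroup.closure_le]
  rintro g ⟨α, hα, rfl⟩
  exact hd.refl_mem_Wgen hα

omit hd in
lemma mem_Wgen_list {w : E ≃ₗᵢ[ℝ] E} (hw : w ∈ Wgen Δ) :
    ∃ l : List E, (∀ x ∈ l, x ∈ Δ) ∧ w = (l.map sigmaRefl).prod := by
  induction hw using Subgroup.closure_induction with
  | mem x hx =>
    obtain ⟨δ, hδ, rfl⟩ := hx
    exact ⟨[δ], by simp [hδ], by simp⟩
  | one => exact ⟨[], by simp, rfl⟩
  | mul x y hx hy ihx ihy =>
    obtain ⟨l1, hl1, rfl⟩ := ihx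
    obtain ⟨l2, hl2, rfl⟩ := ihy
    refine ⟨l1 ++ l2, ?_, by rw [List.map_append, List.prod_append]⟩
    intro x hx
    rcases List.mem_append.1 hx with h' | h'
    · exact hl1 x h'
    · exact hl2 x h'
  | inv x hx ih =>
    obtain ⟨l, hl, rfl⟩ := ih
    refine ⟨l.reverse, fun x hx => hl x (List.mem_reverse.1 hx), ?_⟩
    rw [List.prod_inv_reverse]
    congr 1
    rw [List.map_reverse, List.map_map]
    congr 1

lemma exchange : ∀ (l : List E), (∀ x ∈ l, x ∈ Δ) → ∀ β ∈ Δ,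
    ((l.map sigmaRefl).prod) β ∈ negSet Pos →
    ∃ a b : List E, ∃ γ : E, l = a ++ γ :: b ∧ ((b.map sigmaRefl).prod) β = γ := by
  intro l
  induction l with
  | nil =>
    intro _ β hβ hneg
    simp only [List.map_nil, List.prod_nil] at hneg
    exact absurd hneg (hd.toRSys.not_both (hd.hΔPos hβ))
  | cons γ₀ t ih =>
    intro hl β hβ hneg
    by_cases hu : ((t.map sigmaRefl).prod) β ∈ negSet Pos
    · obtain ⟨a, b, γ, heq, hbp⟩ := ih (fun x hx => hl x (List.mem_cons_of_mem _ hx)) β hβ hu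
      exact ⟨γ₀ :: a, b, γ, by rw [heq]; rfl, hbp⟩
    · have h := hd.toRSys
      have huW : (t.map sigmaRefl).prod ∈ Weyl Φ := by
        apply Subgroup.list_prod_mem
        intro x hx
        obtain ⟨y, hy, rfl⟩ := List.mem_map.1 hx
        exact h.sigma_mem_weyl (h.Pos_sub (hd.hΔPos (hl y (List.mem_cons_of_mem _ hy))))
      have huβΦ : ((t.map sigmaRefl).prod) β ∈ Φ :=
        h.weyl_maps huW (h.Pos_sub (hd.hΔPos hβ))
      have huβPos : ((t.map sigmaRefl).prod) β ∈ Pos := (h.dichotomy huβΦ).resolve_right hu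
      have hσneg : sigmaRefl γ₀ (((t.map sigmaRefl).prod) β) ∈ negSet Pos := by
        rw [List.map_cons, List.prod_cons] at hneg
        exact hneg
      have heq : ((t.map sigmaRefl).prod) β = γ₀ := by
        by_contra hne
        exact h.not_both (hd.sigma_perm (hl γ₀ List.mem_cons_self) huβPos hne) hσneg
      exact ⟨[], t, γ₀, rfl, heq⟩

lemma prod_eq_one : ∀ (n : ℕ) (l : List E), l.length ≤ n → (∀ x ∈ l, x ∈ Δ) →
    (∀ y ∈ Pos, ((l.map sigmaRefl).prod) y ∈ Pos) → (l.map sigmaRefl).prod = 1 := by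
  intro n
  induction n with
  | zero =>
    intro l hlen _ _
    rw [List.length_eq_zero_iff.1 (Nat.le_zero.1 hlen)]
    rfl
  | succ n ihn =>
    intro l hlen hl hpos
    rcases l.eq_nil_or_concat with rfl | ⟨L, β, rfl⟩
    · rfl
    simp only [List.concat_eq_append] at hlen hl hpos ⊢
    have hβΔ : β ∈ Δ := hl β (by simp)
    have hw : ((L ++ [β]).map sigmaRefl).prod = (L.map sigmaRefl).prod * sigmaRefl β := by
      rw [List.map_append, List.prod_append]
      simp
    have hLβ : ((L.map sigmaRefl).prod) β ∈ negSet Pos := by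
      have h1 : (((L ++ [β]).map sigmaRefl).prod) β ∈ Pos := hpos β (hd.hΔPos hβΔ)
      rw [hw] at h1
      have h2 : ((L.map sigmaRefl).prod * sigmaRefl β) β
          = (L.map sigmaRefl).prod (sigmaRefl β β) := rfl
      rw [h2, sigmaRefl_self, map_neg] at h1
      exact Finset.mem_image.2 ⟨_, h1, by simp⟩
    obtain ⟨a, b, γ, hsplit, hbβ⟩ := hd.exchange L
      (fun x hx => hl x (List.mem_append_left _ hx)) β hβΔ hLβ
    subst hsplit
    have hgoal_eq : (((a ++ γ :: b) ++ [β]).map sigmaRefl).prod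
        = ((a ++ b).map sigmaRefl).prod := by
      rw [hw, List.map_append, List.prod_append, List.map_cons, List.prod_cons,
        List.map_append, List.prod_append]
      have hconj : sigmaRefl γ
          = (b.map sigmaRefl).prod * sigmaRefl β * ((b.map sigmaRefl).prod)⁻¹ := by
        rw [← hbβ]; exact sigmaRefl_conj _ β
      rw [hconj]
      have step1 : ((a.map sigmaRefl).prod *
            (((b.map sigmaRefl).prod * sigmaRefl β * ((b.map sigmaRefl).prod)⁻¹) *
              (b.map sigmaRefl).prod)) * sigmaRefl β
          = (a.map sigmaRefl).prod * ((b.map sigmaRefl).prod * (sigmaRefl β * sigmaRefl β)) := by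
        group
      rw [step1, sigmaRefl_mul_self, mul_one]
    rw [hgoal_eq] at hpos ⊢
    apply ihn (a ++ b) _ _ hpos
    · simp only [List.length_append, List.length_cons] at hlen ⊢
      omega
    · intro x hx
      rcases List.mem_append.1 hx with h' | h'
      · exact hl x (List.mem_append_left _ (List.mem_append_left _ h'))
      · exact hl x (List.mem_append_left _ (List.mem_append_right _ (List.mem_cons_of_mem _ h')))

end DSys

theorem RSys.eq_one_of_len_zero {Φ : Finset E} {f : E} {Pos : Finset E} (h : RSys Φ f Pos)
    {w : E ≃ₗᵢ[ℝ] E} (hw : w ∈ Weyl Φ) (hlen : len Pos w = 0) : w = 1 := by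
  classical
  obtain ⟨Δ, hΔPos, hspan, hobt⟩ := h.exists_delta
  have hd : DSys Φ f Pos Δ := ⟨h, hΔPos, hspan, hobt⟩
  have hempty : Pos ∩ (negSet Pos).image w = ∅ := Finset.card_eq_zero.1 hlen
  have hnn : ∀ x ∈ negSet Pos, w x ∈ negSet Pos := by
    intro x hx
    have hxΦ : x ∈ Φ := ((h.mem_neg).1 hx).1
    rcases h.dichotomy (h.weyl_maps hw hxΦ) with h1 | h1
    · exfalso
      have hmem : w x ∈ Pos ∩ (negSet Pos).image w :=
        Finset.mem_inter.2 ⟨h1, Finset.mem_image_of_mem _ hx⟩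
      rw [hempty] at hmem
      exact Finset.notMem_empty _ hmem
    · exact h1
  have hpp : ∀ y ∈ Pos, w y ∈ Pos := by
    intro y hy
    have h1 : -y ∈ negSet Pos := Finset.mem_image.2 ⟨y, hy, rfl⟩
    have h2 := hnn _ h1
    rw [map_neg] at h2
    have h3 := h.neg_mem_Pos h2
    rwa [neg_neg] at h3
  obtain ⟨l, hlΔ, hwl⟩ := DSys.mem_Wgen_list (hd.weyl_le_Wgen hw)
  rw [hwl] at hpp ⊢
  exact hd.prod_eq_one l.length l le_rfl hlΔ hpp

lemma RSys.no_len_one {Φ : Finset E} {f : E} {Pos : Finset E} (h : RSys Φ f Pos)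
    {ΦK : Finset E}
    (hSigmaK : ∀ α ∈ Pos, (¬ ∃ β ∈ Pos, ∃ γ ∈ Pos, α = β + γ) → α ∉ ΦK)
    {x : E ≃ₗᵢ[ℝ] E} (hx : x ∈ Weyl Φ) (heq : len Pos x = lenK Pos ΦK x) :
    len Pos x ≠ 1 := by
  intro h1
  set T := Pos ∩ (negSet Pos).image x with hT
  obtain ⟨β, hβ⟩ := Finset.card_eq_one.1 (show T.card = 1 from h1)
  have hβK : β ∈ ΦK := by
    have hTK : (T ∩ ΦK).card = 1 := by
      have : lenK Pos ΦK x = (T ∩ ΦK).card := rfl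
      omega
    obtain ⟨β', hβ'⟩ := Finset.card_eq_one.1 hTK
    have hmem : β' ∈ T ∩ ΦK := hβ' ▸ Finset.mem_singleton_self β'
    obtain ⟨hβ'T, hβ'K⟩ := Finset.mem_inter.1 hmem
    rw [hβ, Finset.mem_singleton] at hβ'T
    rwa [hβ'T] at hβ'K
  have hβT : β ∈ T := hβ ▸ Finset.mem_singleton_self β
  obtain ⟨hβPos, hβim⟩ := Finset.mem_inter.1 hβT
  refine (hSigmaK β hβPos ?_) hβK
  rintro ⟨γ, hγ, δ, hδ, hsum⟩
  have key : ∀ ζ, ζ ∈ Pos → x.symm ζ ∈ negSet Pos → ζ = β := by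
    intro ζ hζ hζneg
    have hmem : ζ ∈ T := Finset.mem_inter.2
      ⟨hζ, Finset.mem_image.2 ⟨x.symm ζ, hζneg, x.apply_symm_apply ζ⟩⟩
    rw [hβ, Finset.mem_singleton] at hmem
    exact hmem
  have hsympos : ∀ ζ, ζ ∈ Pos → ζ + (β - ζ) = β → (β - ζ) ∈ Pos → 0 < ⟪f, x.symm ζ⟫ := by
    intro ζ hζ hζsum hrest
    have hζΦ : x.symm ζ ∈ Φ := by
      have := (h.weyl_maps' x hx).2 ζ (h.Pos_sub hζ)
      exact this
    rcases h.dichotomy hζΦ with hp | hn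
    · exact ((h.mem_Pos).1 hp).2
    · exfalso
      have hζβ : ζ = β := key ζ hζ hn
      have : β - ζ = 0 := by rw [hζβ]; abel
      rw [this] at hrest
      exact h.h0 (h.Pos_sub hrest)
  have hγpos : 0 < ⟪f, x.symm γ⟫ := by
    apply hsympos γ hγ (by rw [hsum]; abel)
    have : β - γ = δ := by rw [hsum]; abel
    rw [this]; exact hδ
  have hδpos : 0 < ⟪f, x.symm δ⟫ := by
    apply hsympos δ hδ (by rw [hsum]; abel)
    have : β - δ = γ := by rw [hsum]; abel
    rw [this]; exact hγ
  obtain ⟨η, hη, hηβ⟩ := Finset.mem_image.1 hβim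
  have hηev : x.symm β = η := by rw [← hηβ, x.symm_apply_apply]
  have hηn : ⟪f, x.symm β⟫ < 0 := by rw [hηev]; exact ((h.mem_neg).1 hη).2
  have hadd : x.symm β = x.symm γ + x.symm δ := by rw [hsum, map_add]
  rw [hadd, inner_add_right] at hηn
  linarith


theorem statement10 [DecidableEq (E ≃ₗᵢ[ℝ] E)]
    (Φ : Finset E) (h0 : (0 : E) ∉ Φ)
    (hrefl : ∀ α ∈ Φ, Φ.image (sigmaRefl α) = Φ)
    (hred : ∀ α ∈ Φ, {x : E | x ∈ Φ ∧ ∃ t : ℝ, x = t • α} = {α, -α})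
    (f : E) (hf : ∀ α ∈ Φ, ⟪f, α⟫ ≠ 0)
    (Pos : Finset E) (hPos : Pos = Φ.filter fun α => 0 < ⟪f, α⟫)
    (ΦK : Finset E) (hKsub : ΦK ⊆ Φ) (hKsym : ΦK.image (fun x => -x) = ΦK)
    (hSigmaK : ∀ α ∈ Pos, (¬ ∃ β ∈ Pos, ∃ γ ∈ Pos, α = β + γ) → α ∉ ΦK)
    (A D : Finset (E ≃ₗᵢ[ℝ] E))
    (hAW : ↑A ⊆ (Weyl Φ : Set (E ≃ₗᵢ[ℝ] E))) (hDW : ↑D ⊆ (Weyl Φ : Set (E ≃ₗᵢ[ℝ] E)))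
    (hA1 : (1 : E ≃ₗᵢ[ℝ] E) ∈ A) (hD1 : (1 : E ≃ₗᵢ[ℝ] E) ∈ D)
    (V : Finset (E ≃ₗᵢ[ℝ] E))
    (hVdef : V = (A ∩ D).filter fun w => len Pos w = lenK Pos ΦK w)
    (hV : StarCond Φ Pos ↑V)
    (s : (E ≃ₗᵢ[ℝ] E) → (E ≃ₗᵢ[ℝ] E) → ℂ) (hs : IsSignFunction Φ Pos ↑V s) :
    (∀ m ∈ CqSub Pos V 0, totalDiff V s m = 0) ∧
    ∃ h1 : (1 : E ≃ₗᵢ[ℝ] E) ∈ V,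
      Finsupp.single (⟨1, h1⟩ : ↥V) (1 : ℂ) ∈ Zq Pos V s 0 ∧
      cohomDim Pos V s 0 = 1 ∧
      Submodule.span ℂ
          {(Bfull Pos V s 0).mkQ (Finsupp.single (⟨1, h1⟩ : ↥V) (1 : ℂ))} =
        cohomology Pos V s 0 ∧
      (Bfull Pos V s 0).mkQ (Finsupp.single (⟨1, h1⟩ : ↥V) (1 : ℂ)) ≠ 0 := by
  classical
  have hrs : RSys Φ f Pos := ⟨h0, hrefl, hred, hf, hPos⟩
  have hinter : Pos ∩ (negSet Pos).image (1 : E ≃ₗᵢ[ℝ] E) = ∅ := by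
    ext x
    simp only [Finset.mem_inter, Finset.notMem_empty, iff_false, not_and]
    intro hx him
    obtain ⟨y, hy, hyx⟩ := Finset.mem_image.1 him
    have hid : (1 : E ≃ₗᵢ[ℝ] E) y = y := rfl
    rw [hid] at hyx
    exact hrs.not_both hx (hyx ▸ hy)
  have hlen1 : len Pos (1 : E ≃ₗᵢ[ℝ] E) = 0 := by rw [len, hinter]; rfl
  have hlenK1 : lenK Pos ΦK (1 : E ≃ₗᵢ[ℝ] E) = 0 := by rw [lenK, hinter]; simp
  have h1V : (1 : E ≃ₗᵢ[ℝ] E) ∈ V := by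
    rw [hVdef]
    exact Finset.mem_filter.2 ⟨Finset.mem_inter.2 ⟨hA1, hD1⟩, by rw [hlen1, hlenK1]⟩
  have hVW : ∀ v ∈ V, v ∈ Weyl Φ := by
    intro v hv
    rw [hVdef] at hv
    exact hAW (Finset.mem_inter.1 (Finset.mem_filter.1 hv).1).1
  have hVll : ∀ v ∈ V, len Pos v = lenK Pos ΦK v := by
    intro v hv
    rw [hVdef] at hv
    exact (Finset.mem_filter.1 hv).2
  have hno1 : ∀ v ∈ V, len Pos v ≠ 1 := fun v hv =>
    hrs.no_len_one hSigmaK (hVW v hv) (hVll v hv)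
  have part1 : ∀ m ∈ CqSub Pos V 0, totalDiff V s m = 0 := by
    intro m hm
    rw [CqSub, Finsupp.mem_supported] at hm
    rw [totalDiff, Finsupp.lsum_apply, Finsupp.sum]
    apply Finset.sum_eq_zero
    intro y hy
    have hy0 : (len Pos (y : E ≃ₗᵢ[ℝ] E) : ℤ) = 0 := hm hy
    rw [Nat.cast_eq_zero] at hy0
    rw [LinearMap.sum_apply]
    apply Finset.sum_eq_zero
    intro x _
    have hnA : ¬ Arrow Φ Pos ↑x ↑y := by
      intro hA
      exact hno1 ↑x x.2 (by rw [hA.2, hy0])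
    have hs0 : s ↑x ↑y = 0 := hs.2.1 ↑x (Finset.mem_coe.2 x.2) ↑y (Finset.mem_coe.2 y.2) hnA
    rw [LinearMap.smul_apply, hs0, zero_smul]
  have hZq : Zq Pos V s 0 = CqSub Pos V 0 := by
    rw [Zq]
    refine le_antisymm inf_le_left (le_inf le_rfl ?_)
    intro m hm
    exact LinearMap.mem_ker.2 (part1 m hm)
  have hS0 : {v : ↥V | (len Pos (v : E ≃ₗᵢ[ℝ] E) : ℤ) = (0:ℤ)} = {(⟨1, h1V⟩ : ↥V)} := by
    ext v
    simp only [Set.mem_setOf_eq, Set.mem_singleton_iff, Nat.cast_eq_zero]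
    constructor
    · intro hv
      exact Subtype.ext (hrs.eq_one_of_len_zero (hVW ↑v v.2) hv)
    · rintro rfl
      exact hlen1
  have hCq : CqSub Pos V (0:ℤ) = Submodule.span ℂ {Finsupp.single (⟨1, h1V⟩ : ↥V) (1:ℂ)} := by
    rw [CqSub, hS0]
    apply le_antisymm
    · intro m hm
      rw [Finsupp.mem_supported] at hm
      have hsub : m.support ⊆ {(⟨1, h1V⟩ : ↥V)} := fun a ha => Finset.mem_singleton.2 (hm ha)
      have hm' : m = Finsupp.single (⟨1, h1V⟩ : ↥V) (m ⟨1, h1V⟩) :=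
        Finsupp.support_subset_singleton.1 hsub
      rw [hm', show Finsupp.single (⟨1, h1V⟩ : ↥V) (m ⟨1, h1V⟩)
          = (m ⟨1, h1V⟩) • Finsupp.single (⟨1, h1V⟩ : ↥V) (1:ℂ) by
        rw [Finsupp.smul_single, smul_eq_mul, mul_one]]
      exact Submodule.smul_mem _ _ (Submodule.mem_span_singleton_self _)
    · rw [Submodule.span_le]
      rintro m hm
      rw [Set.mem_singleton_iff] at hm
      subst hm
      exact Finsupp.single_mem_supported ℂ (1:ℂ) rfl
  have hBempty : {v : ↥V | (len Pos (v : E ≃ₗᵢ[ℝ] E) : ℤ) = (0:ℤ) - 1} = (∅ : Set ↥V) := by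
    ext v
    simp only [Set.mem_setOf_eq, Set.mem_empty_iff_false, iff_false]
    omega
  have hBfull : Bfull Pos V s 0 = ⊥ := by
    rw [Bfull, CqSub, hBempty, Finsupp.supported_empty, Submodule.map_bot]
  have hne : (Bfull Pos V s 0).mkQ (Finsupp.single (⟨1, h1V⟩ : ↥V) (1:ℂ)) ≠ 0 := by
    rw [Submodule.mkQ_apply, ne_eq, Submodule.Quotient.mk_eq_zero, hBfull, Submodule.mem_bot]
    simp [Finsupp.single_eq_zero]
  have hcoh : cohomology Pos V s 0
      = Submodule.span ℂ {(Bfull Pos V s 0).mkQ (Finsupp.single (⟨1, h1V⟩ : ↥V) (1:ℂ))} := by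
    rw [cohomology, hZq, hCq, Submodule.map_span, Set.image_singleton]
  have hdim : cohomDim Pos V s 0 = 1 := by
    rw [cohomDim, hcoh]
    exact finrank_span_singleton hne
  have hzq : Finsupp.single (⟨1, h1V⟩ : ↥V) (1:ℂ) ∈ Zq Pos V s 0 := by
    rw [hZq, hCq]
    exact Submodule.mem_span_singleton_self _
  exact ⟨part1, h1V, hzq, hdim, hcoh.symm, hne⟩
end
end
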